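/- Let F be a finite field with q elements and let C₁ ⊆ C₂ ⊆ (Fin N → F) be linear codes (submodules) with the same block length N, each containing a nonzero vector, such that Δ(C₂) < Δ(C₁). Then there exists a vector s ∈ (Fin N → F) such that (1) every codeword c ∈ C₁ satisfies hammingDist(s, c) ≥ Δ(C₂), and (2) the cardinality of {c ∈ C₁ : hammingDist(s, c) ≤ Δ(C₂)} multiplied by |C₂| is at least A_{Δ(C₂)}(C₂) multiplied by |C₁|. -/

import Mathlib

/-- The minimum distance of a linear code `C`: the least Hamming weight of a
nonzero codeword of `C`. -/
noncomputable def minDist {N : ℕ} {F : Type*} [Field F] [Fintype F] [DecidableEq F]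
    (C : Submodule F (Fin N → F)) : ℕ :=
  sInf {w : ℕ | ∃ c ∈ C, c ≠ 0 ∧ hammingNorm c = w}

/-- `A_w(C)`: the number of codewords of `C` of Hamming weight exactly `w`. -/
noncomputable def weightCount {N : ℕ} {F : Type*} [Field F] [Fintype F] [DecidableEq F]
    (C : Submodule F (Fin N → F)) (w : ℕ) : ℕ :=
  {c : Fin N → F | c ∈ C ∧ hammingNorm c = w}.ncard

/-- finding a center via a larger code. -/
theorem stmt_1 {N : ℕ} {F : Type*} [Field F] [Fintype F] [DecidableEq F]
    (C₁ C₂ : Submodule F (Fin N → F)) (hsub : C₁ ≤ C₂)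
    (h1 : ∃ c ∈ C₁, c ≠ 0) (h2 : ∃ c ∈ C₂, c ≠ 0)
    (hΔ : minDist C₂ < minDist C₁) :
    ∃ s : Fin N → F,
      (∀ c ∈ C₁, minDist C₂ ≤ hammingDist s c) ∧
      {c : Fin N → F | c ∈ C₁ ∧ hammingDist s c ≤ minDist C₂}.ncard * Nat.card C₂
        ≥ weightCount C₂ (minDist C₂) * Nat.card C₁ := by

  classical
  set d := minDist C₂ with hd
  have hne : {w : ℕ | ∃ c ∈ C₂, c ≠ 0 ∧ hammingNorm c = w}.Nonempty := by
    obtain ⟨c, hc, hc0⟩ := h2; exact ⟨hammingNorm c, c, hc, hc0, rfl⟩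
  obtain ⟨x₀, hx₀C, hx₀0, hx₀n⟩ := Nat.sInf_mem hne
  have hx₀n' : hammingNorm x₀ = d := hx₀n
  have hd0 : d ≠ 0 := by
    intro h; apply hx₀0; rw [h] at hx₀n'; exact hammingNorm_eq_zero.mp hx₀n'
  have factA : ∀ x ∈ C₂, x ≠ 0 → d ≤ hammingNorm x := fun x hx hx0 =>
    Nat.sInf_le ⟨x, hx, hx0, rfl⟩
  have factB : ∀ x ∈ C₂, hammingNorm x = d → x ∉ C₁ := by
    intro x hx hxn hx1
    have hx0 : x ≠ 0 := by
      intro h; apply hd0; rw [h] at hxn; simpa using hxn.symm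
    have : minDist C₁ ≤ d := Nat.sInf_le ⟨x, hx1, hx0, hxn⟩
    omega
  -- quotient setup
  set Q := (Fin N → F) ⧸ C₁ with hQ
  haveI : Finite Q := Quotient.finite _
  haveI : Fintype Q := Fintype.ofFinite _
  set π := C₁.mkQ with hπ
  set s : Finset (Fin N → F) :=
    Finset.univ.filter (fun x => x ∈ C₂ ∧ hammingNorm x = d) with hs
  have hWs : weightCount C₂ d = s.card := by
    rw [weightCount, hs]
    rw [Set.ncard_eq_toFinset_card']
    congr 1
    ext x
    simp only [Set.mem_toFinset, Set.mem_setOf_eq, hs, Finset.mem_filter, Finset.mem_univ,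
      true_and]
  have hx₀s : x₀ ∈ s := by simp [hs, hx₀C, hx₀n']
  set t : Finset Q := s.image π with ht
  -- pigeonhole: pick q in t with max fiber
  have htne : t.Nonempty := ⟨π x₀, Finset.mem_image_of_mem _ hx₀s⟩
  obtain ⟨q, hqt, hqmax⟩ := t.exists_max_image (fun q => (s.filter (fun x => π x = q)).card) htne
  set fib := s.filter (fun x => π x = q) with hfib
  have hcard : s.card ≤ t.card * fib.card := by
    rw [Finset.card_eq_sum_card_fiberwise (f := π) (t := t)
      (fun x hx => Finset.mem_image_of_mem _ hx)]
    calc ∑ b ∈ t, (s.filter (fun x => π x = b)).card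
        ≤ ∑ _b ∈ t, fib.card := Finset.sum_le_sum (fun b hb => hqmax b hb)
      _ = t.card * fib.card := by rw [Finset.sum_const, smul_eq_mul]
  -- pick x₁ ∈ fib
  obtain ⟨x₁, hx₁s, hx₁q⟩ : ∃ x₁ ∈ s, π x₁ = q := Finset.mem_image.mp hqt
  have hx₁C : x₁ ∈ C₂ := by simpa [hs] using (Finset.mem_filter.mp hx₁s).2.1
  have hx₁n : hammingNorm x₁ = d := by simpa [hs] using (Finset.mem_filter.mp hx₁s).2.2
  refine ⟨x₁, ?_, ?_⟩
  · intro c hc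
    have hsub' : x₁ - c ∈ C₂ := C₂.sub_mem hx₁C (hsub hc)
    have hne' : x₁ - c ≠ 0 := by
      intro h
      exact factB x₁ hx₁C hx₁n (by rwa [sub_eq_zero.mp h])
    rw [hammingDist_eq_hammingNorm]
    rw [show -x₁ + c = -(x₁ - c) by abel]
    exact factA _ (C₂.neg_mem hsub') (neg_ne_zero.mpr hne')
  · -- counting
    set T : Set (Fin N → F) := {c | c ∈ C₁ ∧ hammingDist x₁ c ≤ d} with hT
    -- injection fib → T via x ↦ x₁ - x
    have hfibT : fib.card ≤ T.ncard := by
      have hinj : Set.InjOn (fun x => x₁ - x) ↑fib := by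
        intro a _ b _ hab
        exact sub_right_injective hab
      have himg : (fun x => x₁ - x) '' ↑fib ⊆ T := by
        rintro _ ⟨x, hx, rfl⟩
        have hx' := Finset.mem_filter.mp hx
        have hxs := hx'.1
        have hxq : π x = q := hx'.2
        have hxC : x ∈ C₂ := by simpa [hs] using (Finset.mem_filter.mp hxs).2.1
        have hxn : hammingNorm x = d := by simpa [hs] using (Finset.mem_filter.mp hxs).2.2
        have hmem : x₁ - x ∈ C₁ := by
          have : π x₁ = π x := by rw [hx₁q, hxq]
          rwa [hπ, Submodule.mkQ_apply, Submodule.mkQ_apply,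
            Submodule.Quotient.eq] at this
        refine ⟨hmem, ?_⟩
        rw [hammingDist_eq_hammingNorm]
        rw [show -x₁ + (x₁ - x) = -x by abel, show hammingNorm (-x) = hammingNorm x by simp [hammingNorm]]
        exact le_of_eq hxn
      calc fib.card = ((fun x => x₁ - x) '' ↑fib).ncard := by
            rw [Set.ncard_image_of_injOn hinj, Set.ncard_coe_finset]
        _ ≤ T.ncard := Set.ncard_le_ncard himg (Set.toFinite _)
    -- cardinality of C₂ via quotient
    set φ : C₂ →ₗ[F] Q := π.comp C₂.subtype with hφ
    have hker : Nat.card (LinearMap.ker φ) = Nat.card C₁ := by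
      have : LinearMap.ker φ = C₁.comap C₂.subtype := by
        ext x
        simp only [hφ, hπ, LinearMap.mem_ker, LinearMap.comp_apply, Submodule.subtype_apply,
          Submodule.mkQ_apply, Submodule.mem_comap]
        exact Submodule.Quotient.mk_eq_zero _
      rw [this]
      exact Nat.card_congr (Submodule.comapSubtypeEquivOfLe hsub).toEquiv
    have hC₂ : Nat.card C₂ = Nat.card (LinearMap.range φ) * Nat.card C₁ := by
      rw [Submodule.card_eq_card_quotient_mul_card (LinearMap.ker φ), hker,
        Nat.card_congr φ.quotKerEquivRange.toEquiv, Nat.mul_comm]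
    -- t.card ≤ Nat.card (range φ)
    have htcard : t.card ≤ Nat.card (LinearMap.range φ) := by
      have hsub'' : (↑t : Set Q) ⊆ (LinearMap.range φ : Set Q) := by
        intro y hy
        obtain ⟨x, hx, rfl⟩ := Finset.mem_image.mp hy
        have hxC : x ∈ C₂ := by simpa [hs] using (Finset.mem_filter.mp hx).2.1
        exact ⟨⟨x, hxC⟩, rfl⟩
      calc t.card = (↑t : Set Q).ncard := (Set.ncard_coe_finset t).symm
        _ ≤ (LinearMap.range φ : Set Q).ncard := Set.ncard_le_ncard hsub'' (Set.toFinite _)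
        _ = Nat.card (LinearMap.range φ) := (Nat.card_coe_set_eq _).symm
    calc weightCount C₂ d * Nat.card C₁ = s.card * Nat.card C₁ := by rw [hWs]
      _ ≤ (t.card * fib.card) * Nat.card C₁ := Nat.mul_le_mul_right _ hcard
      _ ≤ (Nat.card (LinearMap.range φ) * T.ncard) * Nat.card C₁ := by
          exact Nat.mul_le_mul_right _ (Nat.mul_le_mul htcard hfibT)
      _ = T.ncard * Nat.card C₂ := by rw [hC₂]; ring
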